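/- Let T, S ⊆ X* be such that for every countable set D ⊆ X and every x* ∈ T there is y* ∈ S agreeing with x* on D. Then for every countable set D ⊆ X, the σ_S-closed convex hull of D is contained in the σ_T-closed convex hull of D. -/

import Mathlib

noncomputable section
open Filter Topology Set NormedSpace Pointwise

variable {X : Type*} [NormedAddCommGroup X] [NormedSpace ℝ X] [CompleteSpace X]

/-- `B` is a boundary for `X`: a subset of the dual unit sphere on which every
element of `X` attains its norm. -/
def IsBoundary (B : Set (StrongDual ℝ X)) : Prop :=
  (∀ f ∈ B, ‖f‖ = 1) ∧ ∀ x : X, ∃ f ∈ B, f x = ‖x‖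

/-- The closure of `S` in the topology `σ_B` of pointwise convergence on `B`. -/
def sigmaClosure (B : Set (StrongDual ℝ X)) (S : Set X) : Set X :=
  {x | ∀ ε > (0 : ℝ), ∀ F : Finset (StrongDual ℝ X), (F : Set (StrongDual ℝ X)) ⊆ B →
    ∃ y ∈ S, ∀ f ∈ F, |f x - f y| < ε}

theorem unifying_lemma (T S : Set (StrongDual ℝ X))
    (h : ∀ D : Set X, D.Countable → ∀ f ∈ T, ∃ g ∈ S, ∀ x ∈ D, f x = g x) :
    ∀ D : Set X, D.Countable →
      sigmaClosure S (convexHull ℝ D) ⊆ sigmaClosure T (convexHull ℝ D) := by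
  intro D hD x hx ε hε F hFT
  classical
  have key : ∀ f ∈ F, ∃ g ∈ S, ∀ z ∈ insert x D, f z = g z := fun f hf =>
    h (insert x D) (hD.insert x) f (hFT hf)
  choose g hgS hge using key
  set G : Finset (StrongDual ℝ X) := F.attach.image (fun f => g f.1 f.2) with hG
  have hGS : (G : Set (StrongDual ℝ X)) ⊆ S := by
    intro q hq
    simp only [hG, Finset.coe_image, Set.mem_image] at hq
    obtain ⟨⟨f, hf⟩, _, rfl⟩ := hq
    exact hgS f hf
  obtain ⟨y, hy, hY⟩ := hx ε hε G hGS
  refine ⟨y, hy, fun f hf => ?_⟩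
  have h1 : f x = g f hf x := hge f hf x (Set.mem_insert x D)
  have h2 : f y = g f hf y := by
    have hsub : convexHull ℝ D ⊆ {z : X | f z = g f hf z} := by
      apply convexHull_min
      · exact fun z hz => hge f hf z (Set.mem_insert_of_mem x hz)
      · intro a ha b hb s t hs ht hst
        simp only [Set.mem_setOf_eq, map_add, map_smul, smul_eq_mul] at *
        rw [ha, hb]
    exact hsub hy
  rw [h1, h2]
  refine hY _ ?_
  rw [hG]; exact Finset.mem_image.2 ⟨⟨f, hf⟩, F.mem_attach _, rfl⟩
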